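/- Let G be a group containing a subgroup N of index 2 such that N is free abelian of finite rank n, and write G^{ab} ≅ ℤ^l × (ℤ/2ℤ)^k. Then l equals the rank of the subgroup {x ∈ N : g x g⁻¹ = x} of elements of N fixed by conjugation by g, where g is any element of G \ N (this fixed subgroup does not depend on the choice of g, since N is abelian). -/

import Mathlib

open Finset in
private theorem addHom_decomp {m : ℕ} {R : Type*} [AddCommGroup R] (χ : (Fin m → ℤ) →+ R)
    (v : Fin m → ℤ) : χ v = ∑ j, v j • χ (Pi.single j 1) := by
  have hv : v = ∑ j, v j • Pi.single j (1:ℤ) := by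
    funext i
    simp [Pi.single_apply]
  conv_lhs => rw [hv]
  rw [map_sum]
  exact Finset.sum_congr rfl fun j _ => map_zsmul χ _ _

private theorem den_mul_self (q : ℚ) : (q.den : ℚ) * q = q.num := by
  have hden : (q.den : ℚ) ≠ 0 := by exact_mod_cast q.den_nz
  have h2 : (q.den:ℚ) * ((q.num:ℚ) / q.den) = q.num := by
    rw [mul_comm, div_mul_cancel₀ _ hden]
  rw [Rat.num_div_den q] at h2
  exact h2

/-- The linear functional attached to a vector `u`. -/
private noncomputable def psiHom {n : ℕ} (u : Fin n → ℚ) : (Fin n → ℤ) →+ ℚ where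
  toFun v := ∑ j, (v j : ℚ) * u j
  map_zero' := by simp
  map_add' v w := by
    simp only [Pi.add_apply, Int.cast_add, add_mul]
    rw [Finset.sum_add_distrib]

private theorem psiHom_apply {n : ℕ} (u : Fin n → ℚ) (v : Fin n → ℤ) :
    psiHom u v = ∑ j, (v j : ℚ) * u j := rfl

private theorem psiHom_single {n : ℕ} (u : Fin n → ℚ) (i : Fin n) :
    psiHom u (Pi.single i 1) = u i := by
  rw [psiHom_apply]
  simp [Pi.single_apply]

private theorem psiHom_eq_addHom {n : ℕ} (u : Fin n → ℚ) (χ : (Fin n → ℤ) →+ ℚ)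
    (h : ∀ j, u j = χ (Pi.single j 1)) (v : Fin n → ℤ) : psiHom u v = χ v := by
  rw [addHom_decomp χ v, psiHom_apply]
  refine Finset.sum_congr rfl fun j _ => ?_
  rw [h j, zsmul_eq_mul]

open Multiplicative in
/-- Decomposition of a homomorphism out of `ℤˡ × (ℤ/2)ᵏ` into `ℚ`. -/
private theorem eta_decomp {l k : ℕ}
    (η : Multiplicative ((Fin l → ℤ) × (Fin k → ZMod 2)) →* Multiplicative ℚ)
    (p : (Fin l → ℤ) × (Fin k → ZMod 2)) :
    toAdd (η (ofAdd p)) = ∑ j, (p.1 j : ℚ) * toAdd (η (ofAdd (Pi.single j 1, 0))) := by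
  classical
  set χ : ((Fin l → ℤ) × (Fin k → ZMod 2)) →+ ℚ :=
    AddMonoidHom.mk' (fun p => toAdd (η (ofAdd p))) (by
      intro a b
      simp [ofAdd_add, map_mul, toAdd_mul]) with hχ
  have hsplit : p = (p.1, 0) + (0, p.2) := by
    simp [Prod.ext_iff]
  have h2 : χ (0, p.2) = 0 := by
    have h22 : ((0, p.2) : (Fin l → ℤ) × (Fin k → ZMod 2)) + (0, p.2) = 0 := by
      have : p.2 + p.2 = 0 := by
        funext j
        exact CharTwo.add_self_eq_zero (p.2 j)
      simp [Prod.ext_iff, this]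
    have := map_add χ (0, p.2) (0, p.2)
    rw [h22, map_zero] at this
    linarith [this]
  have h1 : χ (p.1, 0) = ∑ j, (p.1 j : ℚ) * χ (Pi.single j 1, 0) := by
    have := addHom_decomp (χ.comp (AddMonoidHom.inl (Fin l → ℤ) (Fin k → ZMod 2))) p.1
    simp only [AddMonoidHom.comp_apply, AddMonoidHom.inl_apply] at this
    rw [this]
    exact Finset.sum_congr rfl fun j _ => (zsmul_eq_mul _ _)
  have hp : toAdd (η (ofAdd p)) = χ p := rfl
  rw [hp, hsplit, map_add, h2, add_zero, h1]
  refine Finset.sum_congr rfl fun j _ => ?_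
  have : χ (Pi.single j 1, 0) = toAdd (η (ofAdd (Pi.single j 1, 0))) := rfl
  rw [this]
  simp

open Module in
private theorem partB {n : ℕ} (f : (Fin n → ℤ) →ₗ[ℤ] (Fin n → ℤ))
    (fq : (Fin n → ℚ) →ₗ[ℚ] (Fin n → ℚ))
    (hcomm : ∀ v : Fin n → ℤ, (fun i => ((f v i : ℤ) : ℚ)) = fq (fun i => ((v i : ℤ) : ℚ))) :
    Module.finrank ℚ (LinearMap.ker fq) = Module.finrank ℤ (LinearMap.ker f) := by
  classical
  set c : (Fin n → ℤ) →ₗ[ℤ] (Fin n → ℚ) :=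
    { toFun := fun v i => ((v i : ℤ) : ℚ)
      map_add' := by intro v w; funext i; simp
      map_smul' := by
        intro m v; funext i
        simp [zsmul_eq_mul] } with hc
  have hcapp : ∀ v i, c v i = ((v i : ℤ) : ℚ) := fun v i => rfl
  have hcinj : Function.Injective c := by
    intro v w h
    funext i
    have := congrFun h i
    rw [hcapp, hcapp] at this
    exact_mod_cast this
  have hmem : ∀ x : LinearMap.ker f, c x.1 ∈ LinearMap.ker fq := by
    rintro ⟨x, hx⟩
    simp only [LinearMap.mem_ker] at hx ⊢
    have h1 : c (f x) = fq (c x) := hcomm x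
    rw [hx] at h1
    rw [← h1]
    funext i
    rw [hcapp]
    simp
  set φ : (LinearMap.ker f) →ₗ[ℤ] (LinearMap.ker fq) :=
    { toFun := fun x => ⟨c x.1, hmem x⟩
      map_add' := by intro x y; ext : 1; exact map_add c _ _
      map_smul' := by intro m x; ext : 1; exact map_smul c _ _ } with hφ
  haveI : IsLocalizedModule (nonZeroDivisors ℤ) φ := by
    constructor
    · intro s
      rw [Module.End.isUnit_iff]
      have hs : ((s : ℤ) : ℚ) ≠ 0 := by
        exact_mod_cast nonZeroDivisors.coe_ne_zero s
      constructor
      · intro x y hxy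
        simp only [Module.algebraMap_end_apply] at hxy
        apply Subtype.ext
        have hxy' := congrArg Subtype.val hxy
        change ((s:ℤ) • (x:Fin n → ℚ)) = (s:ℤ) • (y:Fin n → ℚ) at hxy'
        have h2 : ((s:ℤ):ℚ) • (x:Fin n → ℚ) = ((s:ℤ):ℚ) • (y:Fin n → ℚ) := by
          rw [Int.cast_smul_eq_zsmul, Int.cast_smul_eq_zsmul]
          exact hxy'
        exact smul_right_injective _ hs h2
      · intro y
        refine ⟨(((s : ℤ) : ℚ))⁻¹ • y, ?_⟩
        simp only [Module.algebraMap_end_apply]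
        rw [← Int.cast_smul_eq_zsmul ℚ, smul_smul]
        rw [mul_inv_cancel₀ hs, one_smul]
    · rintro ⟨y, hy⟩
      set d : ℕ := ∏ i, (y i).den with hd
      have hdpos : 0 < d := Finset.prod_pos (fun i _ => (y i).den_pos)
      have hdvd : ∀ i, (y i).den ∣ d := fun i => Finset.dvd_prod_of_mem _ (Finset.mem_univ i)
      set x : Fin n → ℤ := fun i => (y i).num * (d / (y i).den : ℕ) with hx
      have hcx : c x = (d : ℤ) • y := by
        funext i
        obtain ⟨t, ht⟩ := hdvd i
        have hden : ((y i).den : ℚ) ≠ 0 := by exact_mod_cast (y i).den_nz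
        rw [hcapp, Pi.smul_apply, zsmul_eq_mul]
        have hxi : x i = (y i).num * t := by
          rw [hx]; simp only []
          rw [ht, Nat.mul_div_cancel_left _ (y i).den_pos]
        rw [hxi]
        have hdq : ((d : ℤ) : ℚ) = ((y i).den : ℚ) * (t : ℚ) := by exact_mod_cast ht
        rw [hdq]
        push_cast
        rw [mul_comm ((y i).den : ℚ) (t : ℚ), mul_assoc, den_mul_self]
        ring
      have hxker : x ∈ LinearMap.ker f := by
        rw [LinearMap.mem_ker]
        apply hcinj
        rw [map_zero]
        have h1 : c (f x) = fq (c x) := hcomm x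
        rw [h1, hcx, map_zsmul]
        rw [LinearMap.mem_ker] at hy
        rw [hy, smul_zero]
      refine ⟨⟨⟨x, hxker⟩,
        ⟨(d : ℤ), mem_nonZeroDivisors_of_ne_zero (by exact_mod_cast hdpos.ne')⟩⟩, ?_⟩
      ext : 1
      simpa [hφ] using hcx.symm
    · intro x₁ x₂ h
      refine ⟨1, ?_⟩
      have h2 : c x₁.1 = c x₂.1 := congrArg Subtype.val h
      rw [one_smul, one_smul]
      exact Subtype.ext (hcinj h2)
  have hrank := (IsLocalization.rank_eq ℚ (nonZeroDivisors ℤ) (N := LinearMap.ker fq) le_rfl).trans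
    (IsLocalizedModule.rank_eq (nonZeroDivisors ℤ) le_rfl φ)
  rw [Module.finrank, Module.finrank, hrank]

open Module in
private theorem finrank_ker_transpose {n : ℕ} (B : Matrix (Fin n) (Fin n) ℚ) :
    finrank ℚ (LinearMap.ker (Matrix.mulVecLin (Matrix.transpose B)))
      = finrank ℚ (LinearMap.ker (Matrix.mulVecLin B)) := by
  have h1 := LinearMap.finrank_range_add_finrank_ker (Matrix.mulVecLin (Matrix.transpose B))
  have h2 := LinearMap.finrank_range_add_finrank_ker (Matrix.mulVecLin B)
  have h3 : Matrix.rank (Matrix.transpose B) = Matrix.rank B := Matrix.rank_transpose B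
  unfold Matrix.rank at h3
  omega


open Multiplicative Module

/-- Let `G` be a group containing a subgroup `N` of index `2` with `N` free
abelian of finite rank `n`, and write `Gᵃᵇ ≅ ℤˡ × (ℤ/2ℤ)ᵏ`.  Then `l` equals the rank of the
subgroup `{x ∈ N : g x g⁻¹ = x}` of elements of `N` fixed by conjugation by `g`, where `g` is
any element of `G \ N`.  Here `N` is identified with `ℤⁿ` via the isomorphism `e`, and the
conjugation action is encoded by the additive endomorphism `A` of `ℤⁿ` satisfying
`e.symm (A v) = g • e.symm v • g⁻¹` for all `v`; the fixed subgroup is then the kernel of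
`A - id`, whose rank is its `ℤ`-rank as a free abelian group. -/
theorem rank_free_part_eq_rank_fixed_subgroup
    (G : Type*) [Group G] (N : Subgroup G) (n k l : ℕ)
    (hidx : N.index = 2)
    (e : N ≃* Multiplicative (Fin n → ℤ))
    (g : G) (hg : g ∉ N)
    (A : (Fin n → ℤ) →+ (Fin n → ℤ))
    (hA : ∀ v : Fin n → ℤ,
      ((e.symm (Multiplicative.ofAdd (A v)) : N) : G) =
        g * ((e.symm (Multiplicative.ofAdd v) : N) : G) * g⁻¹)
    (iso : Abelianization G ≃* Multiplicative ((Fin l → ℤ) × (Fin k → ZMod 2))) :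
    l = Module.finrank ℤ
      ↥(LinearMap.ker (A.toIntLinearMap -
          (LinearMap.id : (Fin n → ℤ) →ₗ[ℤ] (Fin n → ℤ)))) := by
  classical
  -- index-two facts
  have hmemcos : ∀ x : G, x ∉ N → x * g⁻¹ ∈ N := by
    intro x hx
    rw [Subgroup.mul_mem_iff_of_index_two hidx]
    constructor
    · intro h; exact absurd h hx
    · intro h; exact absurd (inv_mem_iff.1 h) hg
  have hgg : g * g ∈ N := by
    have := Subgroup.sq_mem_of_index_two hidx g
    rwa [sq] at this
  -- the embedding of ℤⁿ in G
  set elem : (Fin n → ℤ) → G := fun v => ((e.symm (Multiplicative.ofAdd v) : N) : G) with helemdef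
  have helem_mem : ∀ v, elem v ∈ N := fun v => SetLike.coe_mem _
  have helem_mul : ∀ v w, elem (v + w) = elem v * elem w := by
    intro v w
    rw [helemdef]
    simp only [ofAdd_add, map_mul]
    rfl
  have helem_coordN : ∀ z : N, elem (toAdd (e z)) = (z : G) := by
    intro z
    rw [helemdef]
    simp only [ofAdd_toAdd, MulEquiv.symm_apply_apply]
  have hconjN : ∀ z : N, ∃ hz : g * (z : G) * g⁻¹ ∈ N,
      (⟨g * (z : G) * g⁻¹, hz⟩ : N) = e.symm (Multiplicative.ofAdd (A (toAdd (e z)))) := by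
    intro z
    have h := hA (toAdd (e z))
    rw [ofAdd_toAdd, MulEquiv.symm_apply_apply] at h
    exact ⟨h ▸ SetLike.coe_mem _, Subtype.ext h.symm⟩
  -- the value of a functional on elements of N
  set val : (Fin n → ℚ) → N → ℚ := fun u z => psiHom u (toAdd (e z)) with hvaldef
  have hval_app : ∀ u (z : N), val u z = psiHom u (toAdd (e z)) := fun _ _ => rfl
  have hval_mul : ∀ u (z w : N), val u (z * w) = val u z + val u w := by
    intro u z w
    rw [hval_app, hval_app, hval_app, map_mul, toAdd_mul, map_add]
  -- the matrix of A
  set M : Matrix (Fin n) (Fin n) ℤ := Matrix.of (fun i j => A (Pi.single j 1) i) with hMdef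
  have hM_app : ∀ i j, M i j = A (Pi.single j 1) i := fun _ _ => rfl
  have hMA : ∀ v, A v = M.mulVec v := by
    intro v; funext i
    have hdec := addHom_decomp ((Pi.evalAddMonoidHom (fun _ : Fin n => ℤ) i).comp A) v
    simp only [AddMonoidHom.comp_apply, Pi.evalAddMonoidHom_apply] at hdec
    rw [hdec]
    simp only [Matrix.mulVec, dotProduct]
    refine Finset.sum_congr rfl fun j _ => ?_
    rw [hM_app, smul_eq_mul, mul_comm]
  set Mq : Matrix (Fin n) (Fin n) ℚ := M.map (fun z : ℤ => (z : ℚ)) with hMqdef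
  have hMq_app : ∀ i j, Mq i j = ((M i j : ℤ) : ℚ) := fun _ _ => rfl
  set Lmat : Matrix (Fin n) (Fin n) ℚ := Matrix.transpose Mq - 1 with hLmatdef
  set K : Submodule ℚ (Fin n → ℚ) := LinearMap.ker Lmat.mulVecLin with hKdef
  have hKiff : ∀ u : Fin n → ℚ, u ∈ K ↔ ∀ v, psiHom u (A v) = psiHom u v := by
    intro u
    have hsum : ∀ i, Matrix.mulVec (Matrix.transpose Mq) u i
        = ∑ j, ((A (Pi.single i 1) j : ℤ) : ℚ) * u j := by
      intro i
      simp only [Matrix.mulVec, dotProduct, Matrix.transpose_apply]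
      refine Finset.sum_congr rfl fun j _ => ?_
      rw [hMq_app, hM_app]
    have hmem : u ∈ K ↔ ∀ i, psiHom u (A (Pi.single i 1)) = u i := by
      rw [hKdef, LinearMap.mem_ker]
      constructor
      · intro h0 i
        have h0' : Lmat.mulVec u = 0 := by
          rw [← Matrix.mulVecLin_apply]
          exact h0
        have h0i := congrFun h0' i
        rw [hLmatdef, Matrix.sub_mulVec, Pi.sub_apply, Matrix.one_mulVec, hsum,
          Pi.zero_apply] at h0i
        rw [psiHom_apply]
        linarith [h0i]
      · intro h
        have : Lmat.mulVec u = 0 := by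
          funext i
          rw [hLmatdef, Matrix.sub_mulVec, Pi.sub_apply, Matrix.one_mulVec, hsum,
            Pi.zero_apply]
          have h2 := h i
          rw [psiHom_apply] at h2
          rw [h2]
          simp
        rw [← Matrix.mulVecLin_apply] at this
        exact this
    rw [hmem]
    constructor
    · intro h v
      have hdec := addHom_decomp ((psiHom u).comp A) v
      simp only [AddMonoidHom.comp_apply] at hdec
      rw [hdec, psiHom_apply]
      refine Finset.sum_congr rfl fun j _ => ?_
      rw [h j, zsmul_eq_mul]
    · intro h i
      rw [h (Pi.single i 1), psiHom_single]
  -- the functional attached to w on the abelianization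
  set thLin : (Fin l → ℚ) → Multiplicative ((Fin l → ℤ) × (Fin k → ZMod 2)) → ℚ :=
    fun w m => ∑ j, ((toAdd m).1 j : ℚ) * w j with hthdef
  have hth_app : ∀ w m, thLin w m = ∑ j, ((toAdd m).1 j : ℚ) * w j := fun _ _ => rfl
  set rho : (Fin l → ℚ) → G → ℚ := fun w x => thLin w (iso (Abelianization.of x)) with hrhodef
  have hrho_app : ∀ w x, rho w x = thLin w (iso (Abelianization.of x)) := fun _ _ => rfl
  have hrho_mul : ∀ w x y, rho w (x * y) = rho w x + rho w y := by
    intro w x y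
    rw [hrho_app, hrho_app, hrho_app, map_mul, map_mul, hth_app, hth_app, hth_app, toAdd_mul]
    simp only [Prod.fst_add, Pi.add_apply, Int.cast_add, add_mul]
    rw [Finset.sum_add_distrib]
  have hrho_inv : ∀ w x, rho w x⁻¹ = - rho w x := by
    intro w x
    have h1 := hrho_mul w x x⁻¹
    rw [mul_inv_cancel] at h1
    have h0 : rho w 1 = 0 := by
      rw [hrho_app, map_one, map_one, hth_app]
      simp
    rw [h0] at h1
    linarith
  have hrho_conj : ∀ w x, rho w (g * x * g⁻¹) = rho w x := by
    intro w x
    rw [hrho_mul, hrho_mul, hrho_inv]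
    ring
  -- key compatibility
  have hPhi_psi : ∀ w v, psiHom (fun i => rho w (elem (Pi.single i 1))) v = rho w (elem v) := by
    intro w v
    refine psiHom_eq_addHom _ (AddMonoidHom.mk' (fun v => rho w (elem v)) ?_) (fun j => rfl) v
    intro a b
    show rho w (elem (a + b)) = rho w (elem a) + rho w (elem b)
    rw [helem_mul]
    exact hrho_mul w _ _
  have hPhi_memK : ∀ w, (fun i => rho w (elem (Pi.single i 1))) ∈ K := by
    intro w
    rw [hKiff]
    intro v
    rw [hPhi_psi, hPhi_psi]
    have hc : elem (A v) = g * elem v * g⁻¹ := hA v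
    rw [hc, hrho_conj]
  -- the homomorphism G → ℚ attached to u ∈ K
  set F : (Fin n → ℚ) → G → ℚ := fun u x =>
    if h : x ∈ N then val u ⟨x, h⟩ else val u ⟨x * g⁻¹, hmemcos x h⟩ + val u ⟨g * g, hgg⟩ / 2
    with hFdef
  have hF_app : ∀ u x, F u x =
      if h : x ∈ N then val u ⟨x, h⟩ else val u ⟨x * g⁻¹, hmemcos x h⟩ + val u ⟨g * g, hgg⟩ / 2 :=
    fun _ _ => rfl
  have hval_conj : ∀ u, (∀ v, psiHom u (A v) = psiHom u v) →
      ∀ (z : N) (hz : g * (z : G) * g⁻¹ ∈ N), val u ⟨g * (z : G) * g⁻¹, hz⟩ = val u z := by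
    intro u hu z hz
    obtain ⟨hz', hq⟩ := hconjN z
    rw [hval_app, hval_app]
    rw [show (⟨g * (z : G) * g⁻¹, hz⟩ : N) = e.symm (Multiplicative.ofAdd (A (toAdd (e z)))) from hq]
    rw [MulEquiv.apply_symm_apply, toAdd_ofAdd, hu]
  have hFhom : ∀ u, (∀ v, psiHom u (A v) = psiHom u v) →
      ∀ x y, F u (x * y) = F u x + F u y := by
    intro u hu x y
    by_cases hx : x ∈ N <;> by_cases hy : y ∈ N
    · have hxy : x * y ∈ N := mul_mem hx hy
      rw [hF_app, hF_app, hF_app, dif_pos hxy, dif_pos hx, dif_pos hy]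
      rw [show (⟨x * y, hxy⟩ : N) = ⟨x, hx⟩ * ⟨y, hy⟩ from rfl, hval_mul]
    · have hxy : x * y ∉ N := by
        intro h
        have h2 := mul_mem (inv_mem_iff.2 hx) h
        rw [inv_mul_cancel_left] at h2
        exact hy h2
      rw [hF_app, hF_app, hF_app, dif_neg hxy, dif_pos hx, dif_neg hy]
      rw [show (⟨x * y * g⁻¹, hmemcos _ hxy⟩ : N)
          = ⟨x, hx⟩ * ⟨y * g⁻¹, hmemcos y hy⟩ from Subtype.ext (by push_cast; group), hval_mul]
      ring
    · have hxy : x * y ∉ N := by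
        intro h
        have h2 := mul_mem h (inv_mem_iff.2 hy)
        rw [mul_inv_cancel_right] at h2
        exact hx h2
      obtain ⟨hzc, -⟩ := hconjN ⟨y, hy⟩
      rw [hF_app, hF_app, hF_app, dif_neg hxy, dif_neg hx, dif_pos hy]
      rw [show (⟨x * y * g⁻¹, hmemcos _ hxy⟩ : N)
          = ⟨x * g⁻¹, hmemcos x hx⟩ * ⟨g * y * g⁻¹, hzc⟩ from Subtype.ext (by push_cast; group), hval_mul]
      rw [hval_conj u hu ⟨y, hy⟩ hzc]
      ring
    · have hxy : x * y ∈ N := by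
        rw [Subgroup.mul_mem_iff_of_index_two hidx]
        constructor
        · intro h; exact absurd h hx
        · intro h; exact absurd h hy
      obtain ⟨hzc, -⟩ := hconjN ⟨y * g⁻¹, hmemcos y hy⟩
      rw [hF_app, hF_app, hF_app, dif_pos hxy, dif_neg hx, dif_neg hy]
      rw [show (⟨x * y, hxy⟩ : N)
          = ⟨x * g⁻¹, hmemcos x hx⟩ * ⟨g * (y * g⁻¹) * g⁻¹, hzc⟩ * ⟨g * g, hgg⟩
          from Subtype.ext (by push_cast; group), hval_mul, hval_mul]
      rw [hval_conj u hu ⟨y * g⁻¹, hmemcos y hy⟩ hzc]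
      ring
  -- preimages of the standard generators of the abelianization
  have hofsurj : Function.Surjective (Abelianization.of : G →* Abelianization G) := by
    intro a
    obtain ⟨x, hx⟩ := Quotient.exists_rep a
    exact ⟨x, hx⟩
  set xj : Fin l → G :=
    fun j => Classical.choose (hofsurj (iso.symm (Multiplicative.ofAdd (Pi.single j 1, 0))))
    with hxjdef
  have hxj : ∀ j, Abelianization.of (xj j)
      = iso.symm (Multiplicative.ofAdd (Pi.single j 1, 0)) :=
    fun j => Classical.choose_spec (hofsurj (iso.symm (Multiplicative.ofAdd (Pi.single j 1, 0))))
  -- the linear equivalence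
  have hmain : Nonempty ((Fin l → ℚ) ≃ₗ[ℚ] K) := by
    refine ⟨{ toFun := fun w => ⟨fun i => rho w (elem (Pi.single i 1)), hPhi_memK w⟩,
              map_add' := ?_, map_smul' := ?_,
              invFun := fun u => fun j => F u.1 (xj j),
              left_inv := ?_, right_inv := ?_ }⟩
    · intro w w'
      apply Subtype.ext
      funext i
      show rho (w + w') (elem (Pi.single i 1))
        = rho w (elem (Pi.single i 1)) + rho w' (elem (Pi.single i 1))
      rw [hrho_app, hrho_app, hrho_app, hth_app, hth_app, hth_app]
      simp only [Pi.add_apply, mul_add]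
      rw [Finset.sum_add_distrib]
    · intro a w
      apply Subtype.ext
      funext i
      show rho (a • w) (elem (Pi.single i 1)) = a * rho w (elem (Pi.single i 1))
      rw [hrho_app, hrho_app, hth_app, hth_app, Finset.mul_sum]
      refine Finset.sum_congr rfl fun j _ => ?_
      simp only [Pi.smul_apply, smul_eq_mul]
      ring
    · -- left inverse
      intro w
      funext j
      show F (fun i => rho w (elem (Pi.single i 1))) (xj j) = w j
      set u : Fin n → ℚ := fun i => rho w (elem (Pi.single i 1)) with hudef
      have hu := (hKiff u).1 (hPhi_memK w)
      have hvalN : ∀ z : N, val u z = rho w (z : G) := by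
        intro z
        rw [hval_app]
        have := hPhi_psi w (toAdd (e z))
        rw [helem_coordN] at this
        exact this
      have hFrho : ∀ x, F u x = rho w x := by
        intro x
        by_cases hx : x ∈ N
        · rw [hF_app, dif_pos hx]
          exact hvalN ⟨x, hx⟩
        · rw [hF_app, dif_neg hx, hvalN, hvalN]
          show rho w (x * g⁻¹) + rho w (g * g) / 2 = rho w x
          rw [hrho_mul, hrho_mul, hrho_inv]
          ring
      rw [hFrho]
      rw [hrho_app, hxj j, MulEquiv.apply_symm_apply, hth_app]
      simp [Pi.single_apply]
    · -- right inverse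
      rintro ⟨u, huK⟩
      have hu := (hKiff u).1 huK
      apply Subtype.ext
      funext i
      set Fhomu : G →* Multiplicative ℚ :=
        MonoidHom.mk' (fun x => Multiplicative.ofAdd (F u x)) (by
          intro a b
          show Multiplicative.ofAdd (F u (a * b))
            = Multiplicative.ofAdd (F u a) * Multiplicative.ofAdd (F u b)
          rw [hFhom u hu a b]
          rfl) with hFhdef
      set η : Multiplicative ((Fin l → ℤ) × (Fin k → ZMod 2)) →* Multiplicative ℚ :=
        (Abelianization.lift Fhomu).comp iso.symm.toMonoidHom with hetadef
      have heta_app : ∀ m, η m = Abelianization.lift Fhomu (iso.symm m) := fun _ => rfl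
      have hw : ∀ j, F u (xj j) = toAdd (η (Multiplicative.ofAdd (Pi.single j 1, 0))) := by
        intro j
        rw [heta_app, ← hxj j, Abelianization.lift_apply_of]
        rfl
      have hte : ∀ m, (∑ j, ((toAdd m).1 j : ℚ) * F u (xj j)) = toAdd (η m) := by
        intro m
        have hd := eta_decomp η (toAdd m)
        rw [ofAdd_toAdd] at hd
        rw [hd]
        exact Finset.sum_congr rfl fun j _ => by rw [hw j]
      have hrhoF : ∀ x : G, rho (fun j => F u (xj j)) x = F u x := by
        intro x
        rw [hrho_app, hth_app, hte (iso (Abelianization.of x)), heta_app,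
          MulEquiv.symm_apply_apply, Abelianization.lift_apply_of]
        rfl
      show rho (fun j => F u (xj j)) (elem (Pi.single i 1)) = u i
      rw [hrhoF, hF_app, dif_pos (helem_mem (Pi.single i 1)), hval_app]
      rw [show (⟨elem (Pi.single i 1), helem_mem _⟩ : N)
          = e.symm (Multiplicative.ofAdd (Pi.single i 1)) from Subtype.ext rfl]
      rw [MulEquiv.apply_symm_apply, toAdd_ofAdd, psiHom_single]
  obtain ⟨E⟩ := hmain
  have h1 : l = finrank ℚ K := by
    have hE := E.finrank_eq
    rw [Module.finrank_fin_fun] at hE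
    exact hE
  have h2 : Lmat = Matrix.transpose (Mq - 1) := by
    rw [hLmatdef, Matrix.transpose_sub, Matrix.transpose_one]
  have h3 : finrank ℚ K = finrank ℚ (LinearMap.ker (Matrix.mulVecLin (Mq - 1))) := by
    rw [hKdef, h2]
    exact finrank_ker_transpose (Mq - 1)
  set fZ : (Fin n → ℤ) →ₗ[ℤ] (Fin n → ℤ) :=
    A.toIntLinearMap - (LinearMap.id : (Fin n → ℤ) →ₗ[ℤ] (Fin n → ℤ)) with hfZdef
  have hfZ_app : ∀ (v : Fin n → ℤ) i, fZ v i = A v i - v i := by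
    intro v i
    rw [hfZdef]
    simp [LinearMap.sub_apply]
  have hcomm : ∀ v : Fin n → ℤ,
      (fun i => ((fZ v i : ℤ) : ℚ))
        = Matrix.mulVecLin (Mq - 1) (fun i => ((v i : ℤ) : ℚ)) := by
    intro v
    funext i
    show ((fZ v i : ℤ) : ℚ) = Matrix.mulVecLin (Mq - 1) (fun i => ((v i : ℤ) : ℚ)) i
    have hR : Matrix.mulVecLin (Mq - 1) (fun i => ((v i : ℤ) : ℚ)) i
        = (∑ j, Mq i j * ((v j : ℤ) : ℚ)) - ((v i : ℤ) : ℚ) := by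
      have : Matrix.mulVecLin (Mq - 1) (fun i => ((v i : ℤ) : ℚ))
          = (Mq - 1).mulVec (fun i => ((v i : ℤ) : ℚ)) := Matrix.mulVecLin_apply _ _
      rw [this, Matrix.sub_mulVec, Pi.sub_apply, Matrix.one_mulVec]
      rfl
    rw [hR, hfZ_app]
    have hAv := congrFun (hMA v) i
    rw [hAv]
    have hAv2 : M.mulVec v i = ∑ j, M i j * v j := rfl
    rw [hAv2]
    push_cast
    refine congrArg (fun q => q - ((v i : ℤ) : ℚ)) ?_
    refine Finset.sum_congr rfl fun j _ => ?_
    rw [hMq_app]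
  have h4 := partB fZ (Matrix.mulVecLin (Mq - 1)) hcomm
  rw [h1, h3, h4]
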